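/- Let B be a complete Boolean algebra with the μ⁺-chain condition, D a filter on B, and G a set of independent partitions making (B, D, G) a good Boolean triple. For every element b of B that is nonzero mod D, there exists a partition of B into at most μ elements of Fin_s(G), each of which lies below b or below its complement modulo D, supporting b. -/
import Mathlib


universe u v

/-- A filter on a Boolean algebra: a set containing `⊤`, closed under `⊓` and
upward closed. -/
structure BFilter (B : Type u) [BooleanAlgebra B] where
  sets : Set B
  top_mem : ⊤ ∈ sets
  inf_mem : ∀ ⦃a b : B⦄, a ∈ sets → b ∈ sets → a ⊓ b ∈ sets
  mem_of_le : ∀ ⦃a b : B⦄, a ∈ sets → a ≤ b → b ∈ sets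

/-- The filter generated by a filter `D` together with one further element `x`. -/
def BFilter.gen {B : Type u} [BooleanAlgebra B] (D : BFilter B) (x : B) : BFilter B where
  sets := {y | ∃ d ∈ D.sets, x ⊓ d ≤ y}
  top_mem := ⟨⊤, D.top_mem, le_top⟩
  inf_mem := by
    rintro a c ⟨d1, hd1, h1⟩ ⟨d2, hd2, h2⟩
    refine ⟨d1 ⊓ d2, D.inf_mem hd1 hd2, le_inf ?_ ?_⟩
    · exact le_trans (inf_le_inf_left x inf_le_left) h1
    · exact le_trans (inf_le_inf_left x inf_le_right) h2
  mem_of_le := by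
    rintro a c ⟨d, hd, h⟩ hac
    exact ⟨d, hd, h.trans hac⟩

/-- Let `B` be a complete Boolean algebra with the `μ⁺`-chain condition, `D` a filter
on `B`, and `G = {{P i ε : ε < μ} : i ∈ κ}` a set of independent partitions making
`(B, D, G)` a good Boolean triple (all finite intersections `A_h` of members of
distinct partitions are nonzero mod `D`, and `D` is maximal with this property).
Then every `b ∈ B` which is nonzero mod `D` is supported by a partition (mod `D`)
of `B` into at most `μ` elements of `Fin_s(G)`, each of which lies below `b` or
below its complement modulo `D`. -/
theorem exists_supporting_partition {B : Type u} [CompleteBooleanAlgebra B]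
    (μ : Cardinal.{u}) {κ : Type v}
    (hcc : ∀ T : Set B, (∀ a ∈ T, a ≠ ⊥) →
      (T.Pairwise fun a b => a ⊓ b = ⊥) → Cardinal.mk T ≤ μ)
    (P : κ → μ.out → B)
    (hpdisj : ∀ (i : κ) (ε ζ : μ.out), ε ≠ ζ → P i ε ⊓ P i ζ = ⊥)
    (hpsup : ∀ i : κ, (⨆ ε, P i ε) = ⊤)
    (D : BFilter B)
    (htriple : ∀ (s : Finset κ) (e : κ → μ.out), ∀ d ∈ D.sets,
      (s.inf fun i => P i (e i)) ⊓ d ≠ ⊥)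
    (hmax : ∀ D' : BFilter B, D.sets ⊆ D'.sets →
      (∀ (s : Finset κ) (e : κ → μ.out), ∀ d ∈ D'.sets,
        (s.inf fun i => P i (e i)) ⊓ d ≠ ⊥) →
      D'.sets = D.sets)
    (b : B) (hb : ∀ d ∈ D.sets, b ⊓ d ≠ ⊥) :
    ∃ S : Set B,
      Cardinal.mk S ≤ μ ∧
      (∀ c ∈ S, ∃ (s : Finset κ) (e : κ → μ.out), c = s.inf fun i => P i (e i)) ∧
      (∀ c ∈ S, ∀ d ∈ D.sets, c ⊓ d ≠ ⊥) ∧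
      (S.Pairwise fun c c' => (c ⊓ c')ᶜ ∈ D.sets) ∧
      sSup S ∈ D.sets ∧
      ∀ c ∈ S, (c ⊓ bᶜ)ᶜ ∈ D.sets ∨ (c ⊓ b)ᶜ ∈ D.sets := by
  classical
  -- an element `x` whose addition to `D` keeps all `A_h` positive lies in `D`
  have hgen : ∀ x : B, (∀ (s : Finset κ) (e : κ → μ.out), ∀ d ∈ D.sets,
      (s.inf fun i => P i (e i)) ⊓ (x ⊓ d) ≠ ⊥) → x ∈ D.sets := by
    intro x hx
    have h : (D.gen x).sets = D.sets := by
      refine hmax (D.gen x) (fun d hd => ⟨d, hd, inf_le_right⟩) ?_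
      rintro s e y ⟨d, hd, hle⟩ hy
      exact hx s e d hd (le_bot_iff.mp (hy ▸ inf_le_inf_left _ hle))
    rw [← h]
    exact ⟨⊤, D.top_mem, by simp⟩
  -- the family of finite intersections, deciders, incompatibility
  set A : Finset κ × (κ → μ.out) → B := fun p => p.1.inf fun i => P i (p.2 i) with hAdef
  set Dec : Set (Finset κ × (κ → μ.out)) :=
    {p | (A p ⊓ bᶜ)ᶜ ∈ D.sets ∨ (A p ⊓ b)ᶜ ∈ D.sets} with hDecdef
  set Incomp : (Finset κ × (κ → μ.out)) → (Finset κ × (κ → μ.out)) → Prop :=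
    fun p q => ∃ i, i ∈ p.1 ∧ i ∈ q.1 ∧ p.2 i ≠ q.2 i with hIncdef
  -- Zorn: a maximal pairwise-incompatible family of deciders
  obtain ⟨T, hTmax⟩ :=
    zorn_subset {T : Set (Finset κ × (κ → μ.out)) | T ⊆ Dec ∧ T.Pairwise Incomp} (by
      intro c hc hchain
      refine ⟨⋃₀ c, ⟨?_, ?_⟩, fun s hs => Set.subset_sUnion_of_mem hs⟩
      · rintro p ⟨t, htc, hpt⟩
        exact (hc htc).1 hpt
      · rintro p ⟨t1, ht1, hp1⟩ q ⟨t2, ht2, hq2⟩ hpq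
        rcases hchain.total ht1 ht2 with h | h
        · exact (hc ht2).2 (h hp1) hq2 hpq
        · exact (hc ht1).2 hp1 (h hq2) hpq)
  obtain ⟨⟨hTDec, hTpair⟩, hTmax⟩ := hTmax
  -- incompatible pairs give truly disjoint elements
  have hincdisj : ∀ p q, Incomp p q → A p ⊓ A q = ⊥ := by
    rintro p q ⟨i, hip, hiq, hne⟩
    have h1 : A p ≤ P i (p.2 i) := Finset.inf_le hip
    have h2 : A q ≤ P i (q.2 i) := Finset.inf_le hiq
    have := inf_le_inf h1 h2
    rw [hpdisj i _ _ hne] at this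
    exact le_bot_iff.mp this
  have hAne : ∀ p : Finset κ × (κ → μ.out), A p ≠ ⊥ := by
    intro p h
    exact htriple p.1 p.2 ⊤ D.top_mem (by simpa [hAdef] using congrArg (· ⊓ ⊤) h)
  refine ⟨A '' T, ?_, ?_, ?_, ?_, ?_, ?_⟩
  · -- cardinality bound via the chain condition
    refine hcc _ (by rintro a ⟨p, _, rfl⟩; exact hAne p) ?_
    rintro a ⟨p, hp, rfl⟩ a' ⟨q, hq, rfl⟩ hne
    have hpq : p ≠ q := fun h => hne (by rw [h])
    exact hincdisj p q (hTpair hp hq hpq)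
  · rintro c ⟨p, _, rfl⟩
    exact ⟨p.1, p.2, rfl⟩
  · rintro c ⟨p, _, rfl⟩ d hd
    exact htriple p.1 p.2 d hd
  · rintro c ⟨p, hp, rfl⟩ c' ⟨q, hq, rfl⟩ hne
    have hpq : p ≠ q := fun h => hne (by rw [h])
    rw [hincdisj p q (hTpair hp hq hpq), compl_bot]
    exact D.top_mem
  · -- the main point: the supremum belongs to `D`
    by_contra hu
    set u : B := sSup (A '' T) with hudef
    have hAu : ∀ p ∈ T, A p ≤ u := fun p hp => le_sSup ⟨p, hp, rfl⟩
    -- a decider whose intersection with `u` is null mod `D` yields a contradiction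
    have key : ∀ p : Finset κ × (κ → μ.out), ∀ d ∈ D.sets, p ∈ Dec →
        A p ⊓ u ⊓ d = ⊥ → False := by
      intro p d hd hdec hbot
      have hmem : p ∈ T := by
        have hins : insert p T ∈ {T : Set (Finset κ × (κ → μ.out)) |
            T ⊆ Dec ∧ T.Pairwise Incomp} := by
          constructor
          · exact Set.insert_subset hdec hTDec
          · rw [Set.pairwise_insert]
            refine ⟨hTpair, fun q hq _ => ?_⟩
            have hinc : Incomp p q := by
              by_contra hcmp
              simp only [hIncdef, not_exists, not_and, ne_eq, not_not] at hcmp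
              set e' : κ → μ.out := fun i => if i ∈ q.1 then q.2 i else p.2 i with he'def
              have hle1 : ((q.1 ∪ p.1).inf fun i => P i (e' i)) ≤ A q := by
                refine Finset.le_inf fun i hi => ?_
                have : e' i = q.2 i := by simp [he'def, hi]
                rw [← this]
                exact Finset.inf_le (Finset.mem_union_left _ hi)
              have hle2 : ((q.1 ∪ p.1).inf fun i => P i (e' i)) ≤ A p := by
                refine Finset.le_inf fun i hi => ?_
                have : e' i = p.2 i := by
                  by_cases hiq : i ∈ q.1
                  · simp only [he'def, if_pos hiq]
                    exact (hcmp i hi hiq).symm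
                  · simp [he'def, hiq]
                rw [← this]
                exact Finset.inf_le (Finset.mem_union_right _ hi)
              have hle : ((q.1 ∪ p.1).inf fun i => P i (e' i)) ⊓ d ≤ A p ⊓ u ⊓ d :=
                inf_le_inf_right d (le_inf hle2 (hle1.trans (hAu q hq)))
              exact htriple (q.1 ∪ p.1) e' d hd (le_bot_iff.mp (hbot ▸ hle))
            exact ⟨hinc, by
              obtain ⟨i, hip, hiq, hne⟩ := hinc
              exact ⟨i, hiq, hip, fun h => hne h.symm⟩⟩
        exact hTmax hins (Set.subset_insert p T) (Set.mem_insert p T)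
      rw [inf_eq_left.mpr (hAu p hmem)] at hbot
      exact htriple p.1 p.2 d hd hbot
    -- case analysis on whether `D + (u ⊔ b)` and `D + (u ⊔ bᶜ)` stay good
    by_cases h1 : ∃ (s : Finset κ) (e : κ → μ.out), ∃ d ∈ D.sets,
        (s.inf fun i => P i (e i)) ⊓ ((u ⊔ b) ⊓ d) = ⊥
    · obtain ⟨s, e, d, hd, hbot⟩ := h1
      have hub : A (s, e) ⊓ u ⊓ d = ⊥ := by
        have hle : A (s, e) ⊓ u ⊓ d ≤ A (s, e) ⊓ ((u ⊔ b) ⊓ d) := by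
          rw [inf_assoc]
          exact inf_le_inf_left _ (inf_le_inf_right d le_sup_left)
        exact le_bot_iff.mp (hbot ▸ hle)
      have hbb : A (s, e) ⊓ b ⊓ d = ⊥ := by
        have hle : A (s, e) ⊓ b ⊓ d ≤ A (s, e) ⊓ ((u ⊔ b) ⊓ d) := by
          rw [inf_assoc]
          exact inf_le_inf_left _ (inf_le_inf_right d le_sup_right)
        exact le_bot_iff.mp (hbot ▸ hle)
      have hdec : (s, e) ∈ Dec := by
        refine Or.inr (D.mem_of_le hd ?_)
        rw [le_compl_iff_disjoint_right, disjoint_iff]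
        rw [inf_comm d]
        exact hbb
      exact key (s, e) d hd hdec hub
    · by_cases h2 : ∃ (s : Finset κ) (e : κ → μ.out), ∃ d ∈ D.sets,
          (s.inf fun i => P i (e i)) ⊓ ((u ⊔ bᶜ) ⊓ d) = ⊥
      · obtain ⟨s, e, d, hd, hbot⟩ := h2
        have hub : A (s, e) ⊓ u ⊓ d = ⊥ := by
          have hle : A (s, e) ⊓ u ⊓ d ≤ A (s, e) ⊓ ((u ⊔ bᶜ) ⊓ d) := by
            rw [inf_assoc]
            exact inf_le_inf_left _ (inf_le_inf_right d le_sup_left)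
          exact le_bot_iff.mp (hbot ▸ hle)
        have hbb : A (s, e) ⊓ bᶜ ⊓ d = ⊥ := by
          have hle : A (s, e) ⊓ bᶜ ⊓ d ≤ A (s, e) ⊓ ((u ⊔ bᶜ) ⊓ d) := by
            rw [inf_assoc]
            exact inf_le_inf_left _ (inf_le_inf_right d le_sup_right)
          exact le_bot_iff.mp (hbot ▸ hle)
        have hdec : (s, e) ∈ Dec := by
          refine Or.inl (D.mem_of_le hd ?_)
          rw [le_compl_iff_disjoint_right, disjoint_iff]
          rw [inf_comm d]
          exact hbb
        exact key (s, e) d hd hdec hub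
      · push_neg at h1 h2
        have hm1 : u ⊔ b ∈ D.sets := hgen (u ⊔ b) (fun s e d hd => h1 s e d hd)
        have hm2 : u ⊔ bᶜ ∈ D.sets := hgen (u ⊔ bᶜ) (fun s e d hd => h2 s e d hd)
        have : (u ⊔ b) ⊓ (u ⊔ bᶜ) = u := by
          rw [← sup_inf_left, inf_compl_eq_bot, sup_bot_eq]
        exact hu (this ▸ D.inf_mem hm1 hm2)
  · rintro c ⟨p, hp, rfl⟩
    exact hTDec hp
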